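/- Let G be a finite group and φ an endomorphism of G. Then G is the internal semidirect product of nil(φ) (normal) and per(φ): that is, nil(φ) ∩ per(φ) = {1} and nil(φ) · per(φ) = G. -/

import Mathlib

private lemma fitting_idem_power {M : Type*} [Monoid M] [Finite M] (φ : M) :
    ∃ n ≥ 1, φ ^ (2 * n) = φ ^ n := by
  obtain ⟨a, b, hab, h⟩ := Finite.exists_ne_map_eq_of_infinite (fun n : ℕ => φ ^ n)
  wlog hlt : a < b generalizing a b
  · exact this b a hab.symm h.symm (by omega)
  set p := b - a with hp
  have hp1 : 1 ≤ p := by omega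
  have key : ∀ m ≥ a, φ ^ (m + p) = φ ^ m := by
    intro m hm
    have : m = (m - a) + a := by omega
    have h2 : m + p = (m - a) + b := by omega
    rw [h2, pow_add, ← h, ← pow_add]
    congr 1
    omega
  have key2 : ∀ k m, m ≥ a → φ ^ (m + k * p) = φ ^ m := by
    intro k
    induction k with
    | zero => simp
    | succ k ih =>
      intro m hm
      have : m + (k + 1) * p = (m + p) + k * p := by ring
      rw [this, ih _ (by omega), key m hm]
  refine ⟨(a + 1) * p, by nlinarith, ?_⟩
  have : 2 * ((a + 1) * p) = (a + 1) * p + (a + 1) * p := by ring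
  rw [this, key2 (a + 1) _ (by nlinarith)]

theorem fitting_semidirect_decomposition (G : Type*) [Group G] [Finite G]
    (φ : Monoid.End G) :
    (∀ g : G, (∃ n ≥ 1, (φ ^ n) g = 1) → (∃ n ≥ 1, (φ ^ n) g = g) → g = 1) ∧
    (∀ g : G, ∃ x y : G, (∃ n ≥ 1, (φ ^ n) x = 1) ∧ (∃ n ≥ 1, (φ ^ n) y = y) ∧
      g = x * y) := by
  constructor
  · rintro g ⟨k, hk, hk1⟩ ⟨j, hj, hjg⟩
    have hper : ∀ m, (φ ^ (m * j)) g = g := by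
      intro m
      induction m with
      | zero => simp
      | succ m ih =>
        have : (m + 1) * j = j + m * j := by ring
        rw [this, pow_add]
        simp only [Monoid.End.coe_mul, Function.comp_apply, ih, hjg]
    have hnil : (φ ^ (k * j)) g = 1 := by
      have hle : k ≤ k * j := Nat.le_mul_of_pos_right k hj
      have : k * j = (k * j - k) + k := by omega
      rw [this, pow_add]
      simp only [Monoid.End.coe_mul, Function.comp_apply, hk1, map_one]
    rw [← hper k, hnil]
  · intro g
    have : Finite (Monoid.End G) :=
      Finite.of_injective (fun f => (f : G → G)) DFunLike.coe_injective
    obtain ⟨n, hn, hidem⟩ := fitting_idem_power φ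
    refine ⟨g * ((φ ^ n) g)⁻¹, (φ ^ n) g, ⟨n, hn, ?_⟩, ⟨n, hn, ?_⟩, by group⟩
    · have : (φ ^ n) ((φ ^ n) g) = (φ ^ n) g := by
        have := congrArg (fun ψ : Monoid.End G => ψ g) hidem
        simpa [two_mul, pow_add] using this
      rw [map_mul, map_inv, this]
      group
    · have := congrArg (fun ψ : Monoid.End G => ψ g) hidem
      simpa [two_mul, pow_add] using this
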